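/- For every γ ∈ (0,β) there exists a constant K_γ > 0 such that for all ε ∈ (0,1] and all x ≥ 1, a_ε(x) ≥ K_γ·x^{β−γ}, where a_ε(x) := (ε'(ε)/ε''(ε))·a(ε''(ε)·x). -/

import Mathlib

open Filter Set MeasureTheory
open scoped ENNReal

lemma aux_alg (aa d q m : ℝ) (ha : aa ≠ 0) (hq : q ≠ 0) :
    m * d / (2 * aa) = 1 / (2 * (aa * q)) * (d * q) * m := by
  field_simp

set_option maxHeartbeats 1000000 in

lemma my_uct (l : ℝ → ℝ) (hl_cont : ContinuousOn l (Set.Ioi 0)) (hl_pos : ∀ x > (0:ℝ), 0 < l x)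
    (hl_sv : ∀ lam > (0:ℝ), Tendsto (fun x => l (lam * x) / l x) atTop (nhds 1)) :
    ∀ ε > (0:ℝ), ∃ n : ℝ, ∀ u, n ≤ u → ∀ x ∈ Set.Icc (1:ℝ) 2,
      |Real.log (l (Real.exp (u + x))) - Real.log (l (Real.exp u))| ≤ 2 * ε := by
  intro ε hε
  set h : ℝ → ℝ := fun u => Real.log (l (Real.exp u)) with hh
  have hle : Continuous fun u => l (Real.exp u) :=
    hl_cont.comp_continuous Real.continuous_exp (fun u => Real.exp_pos u)
  have hcont : Continuous h := by
    rw [continuous_iff_continuousAt]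
    intro u
    have : ContinuousAt (Real.log ∘ fun u => l (Real.exp u)) u :=
      ContinuousAt.comp (Real.continuousAt_log (ne_of_gt (hl_pos _ (Real.exp_pos u))))
        hle.continuousAt
    exact this
  have hconv : ∀ v : ℝ, Tendsto (fun u => h (u + v) - h u) atTop (nhds 0) := by
    intro v
    have h1 : Tendsto (fun u => l (Real.exp v * Real.exp u) / l (Real.exp u)) atTop (nhds 1) :=
      (hl_sv (Real.exp v) (Real.exp_pos v)).comp Real.tendsto_exp_atTop
    have h2 : Tendsto (fun u => Real.log (l (Real.exp v * Real.exp u) / l (Real.exp u)))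
        atTop (nhds 0) := by
      have := (Real.continuousAt_log one_ne_zero).tendsto.comp h1
      simpa [Function.comp_def] using this
    refine h2.congr (fun u => ?_)
    have p1 : 0 < l (Real.exp v * Real.exp u) := hl_pos _ (by positivity)
    have p2 : 0 < l (Real.exp u) := hl_pos _ (Real.exp_pos u)
    rw [Real.log_div (ne_of_gt p1) (ne_of_gt p2)]
    simp [hh, Real.exp_add, mul_comm]
  set E : ℕ → Set ℝ := fun n =>
    Icc (0:ℝ) 3 ∩ ⋂ (u : ℝ) (_ : (n:ℝ) ≤ u), {v | |h (u + v) - h u| ≤ ε} with hE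
  have hEclosed : ∀ n, IsClosed (E n) := by
    intro n
    refine isClosed_Icc.inter (isClosed_iInter fun u => isClosed_iInter fun _ => ?_)
    exact isClosed_le (((hcont.comp (continuous_const.add continuous_id)).sub
      continuous_const).abs) continuous_const
  have hEmono : Monotone E := by
    intro m k hmk
    refine inter_subset_inter le_rfl ?_
    intro v hv
    simp only [mem_iInter, mem_setOf_eq] at hv ⊢
    intro u hu
    exact hv u (le_trans (by exact_mod_cast Nat.cast_le.mpr hmk) hu)
  have hEunion : ⋃ n, E n = Icc (0:ℝ) 3 := by
    apply subset_antisymm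
    · exact iUnion_subset fun n => inter_subset_left
    · intro v hv
      have hev : ∀ᶠ u in atTop, |h (u + v) - h u| ≤ ε := by
        have hmem : Icc (-ε) ε ∈ nhds (0:ℝ) := Icc_mem_nhds (by linarith) hε
        filter_upwards [(hconv v).eventually_mem hmem] with u hu
        exact abs_le.mpr hu
      obtain ⟨N, hN⟩ := eventually_atTop.mp hev
      obtain ⟨n, hn⟩ := exists_nat_ge N
      refine mem_iUnion.mpr ⟨n, hv, ?_⟩
      simp only [mem_iInter, mem_setOf_eq]
      intro u hu
      exact hN u (le_trans hn hu)
  have hvol : Tendsto (fun n => volume (E n)) atTop (nhds (ENNReal.ofReal 3)) := by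
    have := tendsto_measure_iUnion_atTop (μ := volume) hEmono
    rwa [hEunion, Real.volume_Icc, show (3:ℝ) - 0 = 3 by norm_num] at this
  have hlt : (ENNReal.ofReal (5/2) : ℝ≥0∞) < ENNReal.ofReal 3 := by
    rw [ENNReal.ofReal_lt_ofReal_iff (by norm_num)]; norm_num
  obtain ⟨n, hn⟩ := (hvol.eventually_const_lt hlt).exists
  refine ⟨(n:ℝ), ?_⟩
  intro u hu x hx
  -- measure argument to find v
  have hEsub : E n ⊆ Icc 0 3 := inter_subset_left
  have hEmeas : MeasurableSet (E n) := (hEclosed n).measurableSet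
  have hdiff : volume (Icc (0:ℝ) 3 \ E n) < ENNReal.ofReal (1/2) := by
    rw [measure_diff hEsub hEmeas.nullMeasurableSet (by
      exact ((measure_mono hEsub).trans_lt (by simp [Real.volume_Icc])).ne)]
    rw [Real.volume_Icc, show (3:ℝ) - 0 = 3 by norm_num]
    rw [ENNReal.sub_lt_iff_lt_right (by
        exact ((measure_mono hEsub).trans_lt (by simp [Real.volume_Icc])).ne)
      (measure_mono hEsub |>.trans (by simp [Real.volume_Icc]))]
    calc ENNReal.ofReal 3 = ENNReal.ofReal (1/2) + ENNReal.ofReal (5/2) := by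
          rw [← ENNReal.ofReal_add (by norm_num) (by norm_num)]; norm_num
      _ < ENNReal.ofReal (1/2) + volume (E n) :=
          ENNReal.add_lt_add_left (by simp) hn
  obtain ⟨v, hvE, hvI, hvE2⟩ :
      ∃ v, v ∈ E n ∧ v ∈ Icc 0 x ∧ x - v ∈ E n := by
    by_contra hcon
    push_neg at hcon
    set A := E n ∩ Icc 0 x with hA
    set B := ((fun v => x - v) ⁻¹' (E n)) ∩ Icc 0 x with hB
    have hAmeas : MeasurableSet A := hEmeas.inter measurableSet_Icc
    have hBmeas : MeasurableSet B :=
      (hEmeas.preimage (measurable_const.sub measurable_id)).inter measurableSet_Icc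
    have hIccx : (fun v => x - v) ⁻¹' (Icc 0 x) = Icc 0 x := by
      rw [preimage_const_sub_Icc]; simp
    have hBeq : B = (fun v => x - v) ⁻¹' A := by
      ext w
      simp only [hA, hB, mem_inter_iff, mem_preimage, mem_Icc]
      constructor
      · rintro ⟨h1, h2, h3⟩; exact ⟨h1, by linarith, by linarith⟩
      · rintro ⟨h1, h2, h3⟩; exact ⟨h1, by linarith, by linarith⟩
    have hvolB : volume B = volume A := by
      rw [hBeq]
      exact (MeasureTheory.Measure.measurePreserving_sub_left volume x).measure_preimage hAmeas.nullMeasurableSet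
    have hx01 : (1:ℝ) ≤ x := hx.1
    have hAlow : ENNReal.ofReal (x - 1/2) < volume A := by
      have hsub : Icc (0:ℝ) x ⊆ A ∪ (Icc 0 3 \ E n) := by
        intro w hw
        by_cases hwE : w ∈ E n
        · exact Or.inl ⟨hwE, hw⟩
        · exact Or.inr ⟨Icc_subset_Icc le_rfl (le_trans hx.2 (by norm_num)) hw, hwE⟩
      have h1 : volume (Icc (0:ℝ) x) ≤ volume A + volume (Icc 0 3 \ E n) :=
        (measure_mono hsub).trans (measure_union_le _ _)
      rw [Real.volume_Icc, sub_zero] at h1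
      by_contra hcon2
      push_neg at hcon2
      have : volume (Icc (0:ℝ) 3 \ E n) < ENNReal.ofReal (1/2) := hdiff
      have h2 : ENNReal.ofReal x < ENNReal.ofReal (x - 1/2) + ENNReal.ofReal (1/2) := by
        calc ENNReal.ofReal x ≤ volume A + volume (Icc (0:ℝ) 3 \ E n) := h1
          _ < ENNReal.ofReal (x - 1/2) + ENNReal.ofReal (1/2) := by
              exact ENNReal.add_lt_add_of_le_of_lt (by
                exact (hcon2.trans_lt ENNReal.ofReal_lt_top).ne) hcon2 hdiff
      rw [← ENNReal.ofReal_add (by linarith) (by norm_num)] at h2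
      simp only [sub_add_cancel] at h2
      exact lt_irrefl _ h2
    have hABdisj : Disjoint A B := by
      rw [Set.disjoint_left]
      rintro w ⟨hw1, hw2⟩ ⟨hw3, hw4⟩
      exact hcon w hw1 hw2 hw3
    have hABsub : A ∪ B ⊆ Icc 0 x := union_subset inter_subset_right inter_subset_right
    have h3 : volume A + volume B ≤ ENNReal.ofReal x := by
      rw [← measure_union hABdisj hBmeas]
      exact (measure_mono hABsub).trans (by rw [Real.volume_Icc, sub_zero])
    rw [hvolB] at h3
    have h4 : ENNReal.ofReal (x - 1/2) + ENNReal.ofReal (x - 1/2) < volume A + volume A :=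
      ENNReal.add_lt_add hAlow hAlow
    rw [← ENNReal.ofReal_add (by linarith) (by linarith)] at h4
    have h5 : ENNReal.ofReal x ≤ ENNReal.ofReal (x - 1/2 + (x - 1/2)) :=
      ENNReal.ofReal_le_ofReal (by linarith)
    exact absurd (h5.trans_lt (h4.trans_le h3)) (lt_irrefl _)
  -- now conclude
  have hvprop : ∀ u', (n:ℝ) ≤ u' → |h (u' + v) - h u'| ≤ ε := by
    have := hvE.2; simp only [mem_iInter, mem_setOf_eq] at this; exact this
  have hxvprop : ∀ u', (n:ℝ) ≤ u' → |h (u' + (x - v)) - h u'| ≤ ε := by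
    have := hvE2.2; simp only [mem_iInter, mem_setOf_eq] at this; exact this
  have e1 : |h (u + v) - h u| ≤ ε := hvprop u hu
  have e2 : |h ((u + v) + (x - v)) - h (u + v)| ≤ ε :=
    hxvprop (u + v) (by linarith [hvI.1])
  have heq : (u + v) + (x - v) = u + x := by ring
  rw [heq] at e2
  calc |h (u + x) - h u| ≤ |h (u + x) - h (u + v)| + |h (u + v) - h u| := abs_sub_le _ _ _
    _ ≤ ε + ε := add_le_add e2 e1
    _ = 2 * ε := by ring

set_option maxHeartbeats 1000000 in
lemma my_potter (l : ℝ → ℝ) (hl_cont : ContinuousOn l (Set.Ioi 0))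
    (hl_pos : ∀ x > (0:ℝ), 0 < l x)
    (hl_sv : ∀ lam > (0:ℝ), Tendsto (fun x => l (lam * x) / l x) atTop (nhds 1)) :
    ∀ γ > (0:ℝ), ∃ t₀ : ℝ, 1 ≤ t₀ ∧ ∀ t T, t₀ ≤ t → t ≤ T →
      l T ≤ Real.exp (2 * γ) * (T / t) ^ γ * l t := by
  intro γ hγ
  obtain ⟨n, hn⟩ := my_uct l hl_cont hl_pos hl_sv (γ/2) (by linarith)
  set h : ℝ → ℝ := fun u => Real.log (l (Real.exp u)) with hh
  have key : ∀ u, n ≤ u → ∀ x ∈ Set.Icc (1:ℝ) 2, |h (u + x) - h u| ≤ γ := by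
    intro u hu x hx
    have h1 := hn u hu x hx
    calc |h (u + x) - h u| ≤ 2 * (γ/2) := h1
      _ = γ := by ring
  have chain : ∀ k : ℕ, ∀ u, n ≤ u → ∀ U, u ≤ U → U ≤ u + k + 1 →
      h U - h u ≤ γ * k + 2 * γ := by
    intro k
    induction k with
    | zero =>
      intro u hu U hU1 hU2
      push_cast at hU2
      have h1 : h (u + (U - u + 1)) - h u ≤ γ := by
        have := abs_le.mp (key u hu (U - u + 1) ⟨by linarith, by linarith⟩)
        linarith [this.2]
      have h2 : -γ ≤ h (U + 1) - h U := by
        have := abs_le.mp (key U (by linarith) 1 ⟨le_refl 1, by norm_num⟩)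
        linarith [this.1]
      have heq : u + (U - u + 1) = U + 1 := by ring
      rw [heq] at h1
      push_cast
      linarith
    | succ k ih =>
      intro u hu U hU1 hU2
      push_cast at hU2
      by_cases hc : U ≤ u + k + 1
      · have := ih u hu U hU1 hc
        have hk0 : (0:ℝ) ≤ (k:ℝ) := Nat.cast_nonneg k
        push_cast
        nlinarith
      · push_neg at hc
        have h1 : h (u + 1) - h u ≤ γ := by
          have := abs_le.mp (key u hu 1 ⟨le_refl 1, by norm_num⟩)
          linarith [this.2]
        have h2 := ih (u + 1) (by linarith) U (by linarith) (by push_cast; linarith)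
        push_cast at h2 ⊢
        linarith
  refine ⟨max 1 (Real.exp n), le_max_left _ _, ?_⟩
  intro t T ht hT
  have ht0 : (0:ℝ) < t := lt_of_lt_of_le one_pos (le_trans (le_max_left _ _) ht)
  have hT0 : (0:ℝ) < T := lt_of_lt_of_le ht0 hT
  have hu : n ≤ Real.log t := by
    rw [Real.le_log_iff_exp_le ht0]
    exact le_trans (le_max_right _ _) ht
  have hlog : Real.log t ≤ Real.log T := Real.log_le_log ht0 hT
  set k := ⌊Real.log T - Real.log t⌋₊ with hk
  have hk1 : (k:ℝ) ≤ Real.log T - Real.log t := Nat.floor_le (by linarith)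
  have hk2 : Real.log T - Real.log t < k + 1 := Nat.lt_floor_add_one _
  have hchain := chain k (Real.log t) hu (Real.log T) hlog (by push_cast; linarith)
  have e1 : h (Real.log T) = Real.log (l T) := by rw [hh]; simp [Real.exp_log hT0]
  have e2 : h (Real.log t) = Real.log (l t) := by rw [hh]; simp [Real.exp_log ht0]
  rw [e1, e2] at hchain
  have hbound : Real.log (l T) - Real.log (l t) ≤ γ * (Real.log T - Real.log t) + 2 * γ := by
    nlinarith
  have hlT : 0 < l T := hl_pos _ hT0
  have hlt : 0 < l t := hl_pos _ ht0
  have hTt : (0:ℝ) < T / t := by positivity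
  have hrhs : Real.log (Real.exp (2 * γ) * (T / t) ^ γ * l t) =
      2 * γ + γ * (Real.log T - Real.log t) + Real.log (l t) := by
    rw [Real.log_mul (by positivity) (ne_of_gt hlt), Real.log_mul (by positivity) (by positivity),
      Real.log_exp, Real.log_rpow hTt, Real.log_div (ne_of_gt hT0) (ne_of_gt ht0)]
  have hfin : Real.log (l T) ≤ Real.log (Real.exp (2 * γ) * (T / t) ^ γ * l t) := by
    rw [hrhs]; linarith
  exact (Real.log_le_log_iff hlT (by positivity)).mp hfin

set_option maxHeartbeats 2000000 in
/-- Uniform power-law lower bound for the rescaled drift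
`a_ε(x) = (ε'/ε'')·a(ε''·x)` on `[1,∞)`. -/
theorem stmt_7 (β Ap : ℝ) (hβ : β ∈ Set.Ioo (0:ℝ) 1) (hAp : 0 < Ap)
    (a Lp l : ℝ → ℝ)
    (ha_cont : Continuous a) (ha0 : a 0 = 0)
    (hLp_cont : ContinuousOn Lp (Set.Ioc 0 1)) (hLp_pos : ∀ x ∈ Set.Ioc (0:ℝ) 1, 0 < Lp x)
    (hform : ∀ x > (0:ℝ), a x = x ^ β * Lp (min x 1))
    (hl_cont : ContinuousOn l (Set.Ioi 0)) (hl_pos : ∀ x > (0:ℝ), 0 < l x)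
    (hl_sv : ∀ lam > (0:ℝ), Tendsto (fun x => l (lam * x) / l x) atTop (nhds 1))
    (hLp_asymp : Tendsto (fun x => Lp x / (Ap * l (1 / x))) (nhdsWithin 0 (Set.Ioi 0)) (nhds 1))
    (e' e'' : ℝ → ℝ)
    (he'_cont : ContinuousOn e' (Set.Ioc 0 1)) (he''_cont : ContinuousOn e'' (Set.Ioc 0 1))
    (hpos : ∀ ε ∈ Set.Ioc (0:ℝ) 1, 0 < e' ε ∧ 0 < e'' ε)
    (he'' : Tendsto e'' (nhdsWithin 0 (Set.Ioi 0)) (nhds 0))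
    (hratio : Tendsto (fun ε => (e'' ε / e' ε) / ((e'' ε) ^ β * l (1 / e'' ε)))
      (nhdsWithin 0 (Set.Ioi 0)) (nhds 1)) :
    ∀ γ ∈ Set.Ioo (0:ℝ) β, ∃ K > (0:ℝ), ∀ ε ∈ Set.Ioc (0:ℝ) 1, ∀ x ≥ (1:ℝ),
      K * x ^ (β - γ) ≤ (e' ε / e'' ε) * a (e'' ε * x) := by
  obtain ⟨hβ0, hβ1⟩ := hβ
  intro γ hγ
  obtain ⟨hγ0, hγβ⟩ := hγ
  obtain ⟨t₀, ht₀1, hpot⟩ := my_potter l hl_cont hl_pos hl_sv γ hγ0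
  have ht₀pos : (0:ℝ) < t₀ := lt_of_lt_of_le one_pos ht₀1
  have hlt₀pos : 0 < l t₀ := hl_pos _ ht₀pos
  -- get δa from the Lp asymptotics
  have hLa : {s : ℝ | (1:ℝ)/2 < Lp s / (Ap * l (1/s))} ∈ nhdsWithin 0 (Set.Ioi 0) :=
    hLp_asymp (Ioi_mem_nhds (by norm_num : (1:ℝ)/2 < 1))
  obtain ⟨δa, hδa0, hδaI⟩ := mem_nhdsGT_iff_exists_Ioo_subset.mp hLa
  have hδa0' : (0:ℝ) < δa := hδa0
  have hLpLow : ∀ s : ℝ, 0 < s → s < δa → Ap/2 * l (1/s) < Lp s := by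
    intro s hs1 hs2
    have hmem := hδaI (show s ∈ Ioo 0 δa from ⟨hs1, hs2⟩)
    have hls : 0 < l (1/s) := hl_pos _ (by positivity)
    have hD : 0 < Ap * l (1/s) := by positivity
    have := (lt_div_iff₀ hD).mp hmem
    nlinarith
  -- δ₀
  set δ₀ : ℝ := min (δa/2) (min (1/t₀) 1) with hδ₀def
  have hδ₀pos : 0 < δ₀ := by
    apply lt_min (by positivity) (lt_min (by positivity) one_pos)
  have hδ₀δa : δ₀ < δa := lt_of_le_of_lt (min_le_left _ _) (by linarith)
  have hδ₀t₀ : δ₀ ≤ 1/t₀ := le_trans (min_le_right _ _) (min_le_left _ _)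
  have hδ₀1 : δ₀ ≤ 1 := le_trans (min_le_right _ _) (min_le_right _ _)
  -- eventual conditions for small ε
  have hS1 : {ε : ℝ | e'' ε < δ₀} ∈ nhdsWithin 0 (Set.Ioi 0) :=
    he'' (Iio_mem_nhds hδ₀pos)
  have hS2 : {ε : ℝ | (e'' ε / e' ε) / ((e'' ε) ^ β * l (1 / e'' ε)) < 2} ∈
      nhdsWithin 0 (Set.Ioi 0) :=
    hratio (Iio_mem_nhds (by norm_num : (1:ℝ) < 2))
  obtain ⟨δ₁, hδ₁0, hδ₁I⟩ := mem_nhdsGT_iff_exists_Ioo_subset.mp (inter_mem hS1 hS2)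
  set δ₂ : ℝ := min δ₁ 1 with hδ₂def
  have hδ₂pos : 0 < δ₂ := lt_min hδ₁0 one_pos
  have hδ₂1 : δ₂ ≤ 1 := min_le_right _ _
  -- compact minima
  have hsubc : Icc δ₂ 1 ⊆ Set.Ioc (0:ℝ) 1 := fun y hy => ⟨lt_of_lt_of_le hδ₂pos hy.1, hy.2⟩
  obtain ⟨ε₀, hε₀mem, hFmin⟩ := isCompact_Icc.exists_isMinOn
    (nonempty_Icc.mpr hδ₂1)
    (((he'_cont.mono hsubc).div (he''_cont.mono hsubc)
        (fun y hy => ne_of_gt (hpos y (hsubc hy)).2)).mul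
      ((he''_cont.mono hsubc).rpow_const (fun y _ => Or.inr hβ0.le)))
  obtain ⟨ε₁, hε₁mem, he''min⟩ := isCompact_Icc.exists_isMinOn
    (nonempty_Icc.mpr hδ₂1) (he''_cont.mono hsubc)
  set μ2 : ℝ := e'' ε₁ with hμ2def
  have hμ2pos : 0 < μ2 := (hpos ε₁ (hsubc hε₁mem)).2
  have hsubL1 : Icc δ₀ 1 ⊆ Set.Ioc (0:ℝ) 1 := fun y hy => ⟨lt_of_lt_of_le hδ₀pos hy.1, hy.2⟩
  obtain ⟨s₀, hs₀mem, hs₀min⟩ := isCompact_Icc.exists_isMinOn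
    (nonempty_Icc.mpr hδ₀1) (hLp_cont.mono hsubL1)
  have hsubL2 : Icc (min μ2 1) 1 ⊆ Set.Ioc (0:ℝ) 1 :=
    fun y hy => ⟨lt_of_lt_of_le (lt_min hμ2pos one_pos) hy.1, hy.2⟩
  obtain ⟨s₁, hs₁mem, hs₁min⟩ := isCompact_Icc.exists_isMinOn
    (nonempty_Icc.mpr (min_le_right _ _)) (hLp_cont.mono hsubL2)
  have hm0 : 0 < Lp s₀ := hLp_pos _ (hsubL1 hs₀mem)
  have hm1 : 0 < Lp s₁ := hLp_pos _ (hsubL2 hs₁mem)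
  have hFε₀pos : 0 < e' ε₀ / e'' ε₀ * e'' ε₀ ^ β := by
    have h1 := (hpos ε₀ (hsubc hε₀mem)).1
    have h2 := (hpos ε₀ (hsubc hε₀mem)).2
    positivity
  -- constants
  set KA : ℝ := Ap / (4 * Real.exp (2*γ)) with hKAdef
  set KB : ℝ := Lp s₀ * δ₀ ^ γ / (2 * (Real.exp (2*γ) * l t₀)) with hKBdef
  set KC : ℝ := (e' ε₀ / e'' ε₀ * e'' ε₀ ^ β) * Lp s₁ with hKCdef
  have hKApos : 0 < KA := by positivity
  have hKBpos : 0 < KB := by positivity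
  have hKCpos : 0 < KC := by positivity
  refine ⟨min (min KA KB) KC, lt_min (lt_min hKApos hKBpos) hKCpos, ?_⟩
  intro ε hε x hx
  have hε0 : 0 < ε := hε.1
  have hε1 : ε ≤ 1 := hε.2
  have he'pos : 0 < e' ε := (hpos ε hε).1
  have he''pos : 0 < e'' ε := (hpos ε hε).2
  have hx0 : (0:ℝ) < x := lt_of_lt_of_le one_pos hx
  have he''x : 0 < e'' ε * x := by positivity
  rw [hform _ he''x, Real.mul_rpow he''pos.le hx0.le]
  have hxbg : (0:ℝ) < x ^ (β - γ) := by positivity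
  by_cases hcase : ε < δ₂
  · -- small ε
    have hmem := hδ₁I (show ε ∈ Ioo 0 δ₁ from ⟨hε0, lt_of_lt_of_le hcase (min_le_left _ _)⟩)
    have hs1 : e'' ε < δ₀ := hmem.1
    have hs2 : (e'' ε / e' ε) / ((e'' ε) ^ β * l (1 / e'' ε)) < 2 := hmem.2
    have hLpos : 0 < l (1 / e'' ε) := hl_pos _ (by positivity)
    have hPpos : 0 < (e'' ε) ^ β * l (1 / e'' ε) := by positivity
    have hRL : 1/2 < e' ε / e'' ε * ((e'' ε) ^ β * l (1 / e'' ε)) := by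
      have h3 : e'' ε < 2 * ((e'' ε) ^ β * l (1 / e'' ε)) * e' ε := by
        have := (div_lt_iff₀ hPpos).mp hs2
        have := (div_lt_iff₀ he'pos).mp this
        nlinarith
      rw [div_mul_eq_mul_div, lt_div_iff₀ he''pos]
      nlinarith
    by_cases hcase2 : e'' ε * x < δ₀
    · -- subcase A
      have hmin : min (e'' ε * x) 1 = e'' ε * x :=
        min_eq_left (le_of_lt (lt_of_lt_of_le hcase2 hδ₀1))
      rw [hmin]
      have hLpx : Ap/2 * l (1/(e'' ε * x)) < Lp (e'' ε * x) :=
        hLpLow _ he''x (lt_of_lt_of_le hcase2 hδ₀δa.le)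
      -- Potter
      have ht1 : t₀ ≤ 1/(e'' ε * x) := by
        rw [le_div_iff₀ he''x]
        have h4 : δ₀ * t₀ ≤ 1 := (le_div_iff₀ ht₀pos).mp hδ₀t₀
        nlinarith
      have ht2 : 1/(e'' ε * x) ≤ 1/(e'' ε) := by
        apply div_le_div_of_nonneg_left one_pos.le he''pos
        nlinarith
      have hP := hpot _ _ ht1 ht2
      have hTt : (1/(e'' ε))/(1/(e'' ε * x)) = x := by
        field_simp
      rw [hTt] at hP
      have hxγ : (0:ℝ) < x ^ γ := by positivity
      have hLlow : l (1/(e'' ε)) / (Real.exp (2*γ) * x ^ γ) ≤ l (1/(e'' ε * x)) := by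
        rw [div_le_iff₀ (by positivity)]
        calc l (1/(e'' ε)) ≤ Real.exp (2*γ) * x ^ γ * l (1/(e'' ε * x)) := hP
          _ = l (1/(e'' ε * x)) * (Real.exp (2*γ) * x ^ γ) := by ring
      calc min (min KA KB) KC * x ^ (β - γ)
          ≤ KA * x ^ (β - γ) := by
            gcongr
            exact le_trans (min_le_left _ _) (min_le_left _ _)
        _ = (1/2) * ((Ap/2) / Real.exp (2*γ)) * (x ^ β / x ^ γ) := by
            rw [Real.rpow_sub hx0, hKAdef]; ring
        _ ≤ (e' ε / e'' ε * ((e'' ε) ^ β * l (1 / e'' ε))) *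
              ((Ap/2) / Real.exp (2*γ)) * (x ^ β / x ^ γ) := by
            have hc : (0:ℝ) ≤ (Ap/2) / Real.exp (2*γ) := by positivity
            have hd : (0:ℝ) ≤ x ^ β / x ^ γ := by positivity
            exact mul_le_mul_of_nonneg_right
              (mul_le_mul_of_nonneg_right hRL.le hc) hd
        _ = e' ε / e'' ε * (e'' ε ^ β * (x ^ β *
              (Ap/2 * (l (1 / e'' ε) / (Real.exp (2*γ) * x ^ γ))))) := by
            ring
        _ ≤ e' ε / e'' ε * (e'' ε ^ β * (x ^ β * Lp (e'' ε * x))) := by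
            gcongr
            exact le_trans (by gcongr <;> positivity) hLpx.le
        _ = e' ε / e'' ε * (e'' ε ^ β * x ^ β * Lp (e'' ε * x)) := by ring
    · -- subcase B
      push_neg at hcase2
      have hminmem : min (e'' ε * x) 1 ∈ Icc δ₀ 1 :=
        ⟨le_min hcase2 hδ₀1, min_le_right _ _⟩
      have hLpm : Lp s₀ ≤ Lp (min (e'' ε * x) 1) := hs₀min hminmem
      -- Potter for l(1/e'')
      have hT1 : t₀ ≤ 1/(e'' ε) := by
        rw [le_div_iff₀ he''pos]
        have h4 : δ₀ * t₀ ≤ 1 := (le_div_iff₀ ht₀pos).mp hδ₀t₀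
        nlinarith
      have hP := hpot t₀ (1/(e'' ε)) le_rfl hT1
      have hq : (0:ℝ) < (1/(e'' ε)) ^ γ := by positivity
      have hLup : l (1/(e'' ε)) ≤ Real.exp (2*γ) * l t₀ * (1/(e'' ε)) ^ γ := by
        calc l (1/(e'' ε)) ≤ Real.exp (2*γ) * ((1/(e'' ε))/t₀) ^ γ * l t₀ := hP
          _ ≤ Real.exp (2*γ) * (1/(e'' ε)) ^ γ * l t₀ := by
              have hbase : 1/(e'' ε)/t₀ ≤ 1/(e'' ε) := div_le_self (by positivity) ht₀1
              have hr := Real.rpow_le_rpow (by positivity) hbase hγ0.le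
              exact mul_le_mul_of_nonneg_right
                (mul_le_mul_of_nonneg_left hr (Real.exp_pos _).le) hlt₀pos.le
          _ = Real.exp (2*γ) * l t₀ * (1/(e'' ε)) ^ γ := by ring
      have hA1B1 : 1 / (2 * (Real.exp (2*γ) * l t₀ * (1/(e'' ε)) ^ γ)) ≤
          e' ε / e'' ε * (e'' ε) ^ β := by
        have hL2 : 1 / (2 * l (1/(e'' ε))) ≤ e' ε / e'' ε * (e'' ε) ^ β := by
          rw [div_le_iff₀ (by positivity)]
          have hb : (0:ℝ) < (e'' ε) ^ β := by positivity
          nlinarith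
        refine le_trans ?_ hL2
        apply one_div_le_one_div_of_le (by positivity)
        nlinarith
      have hxγδ : δ₀ ^ γ * (1/(e'' ε)) ^ γ ≤ x ^ γ := by
        rw [← Real.mul_rpow hδ₀pos.le (by positivity)]
        apply Real.rpow_le_rpow (by positivity) _ hγ0.le
        rw [mul_one_div, div_le_iff₀ he''pos]
        nlinarith
      have hxsplit : x ^ β = x ^ (β - γ) * x ^ γ := by
        rw [← Real.rpow_add hx0]; ring_nf
      calc min (min KA KB) KC * x ^ (β - γ)
          ≤ KB * x ^ (β - γ) := by
            gcongr
            exact le_trans (min_le_left _ _) (min_le_right _ _)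
        _ = (1 / (2 * (Real.exp (2*γ) * l t₀ * (1/(e'' ε)) ^ γ)) *
              (δ₀ ^ γ * (1/(e'' ε)) ^ γ) * Lp s₀) * x ^ (β - γ) := by
            have h := aux_alg (Real.exp (2*γ) * l t₀) (δ₀ ^ γ) ((1/(e'' ε)) ^ γ)
              (Lp s₀) (by positivity) (ne_of_gt hq)
            rw [hKBdef, h]
        _ ≤ ((e' ε / e'' ε * (e'' ε) ^ β) * x ^ γ * Lp (min (e'' ε * x) 1)) *
              x ^ (β - γ) := by
            have hA1B1nn : (0:ℝ) ≤ e' ε / e'' ε * (e'' ε) ^ β := by positivity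
            refine mul_le_mul_of_nonneg_right ?_ hxbg.le
            refine mul_le_mul (mul_le_mul hA1B1 hxγδ (by positivity) hA1B1nn)
              (hs₀min hminmem) hm0.le (by positivity)
        _ = e' ε / e'' ε * (e'' ε ^ β * x ^ β * Lp (min (e'' ε * x) 1)) := by
            rw [hxsplit]; ring
  · -- compact case
    push_neg at hcase
    have hεmem : ε ∈ Icc δ₂ 1 := ⟨hcase, hε1⟩
    have hFε : e' ε₀ / e'' ε₀ * e'' ε₀ ^ β ≤ e' ε / e'' ε * (e'' ε) ^ β := hFmin hεmem
    have hμ2 : μ2 ≤ e'' ε := he''min hεmem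
    have hminmem : min (e'' ε * x) 1 ∈ Icc (min μ2 1) 1 := by
      constructor
      · apply min_le_min _ le_rfl
        nlinarith
      · exact min_le_right _ _
    have hLpm : Lp s₁ ≤ Lp (min (e'' ε * x) 1) := hs₁min hminmem
    have hxββγ : x ^ (β - γ) ≤ x ^ β :=
      Real.rpow_le_rpow_of_exponent_le hx (by linarith)
    calc min (min KA KB) KC * x ^ (β - γ)
        ≤ KC * x ^ (β - γ) := by gcongr; exact min_le_right _ _
      _ = (e' ε₀ / e'' ε₀ * e'' ε₀ ^ β) * x ^ (β - γ) * Lp s₁ := by rw [hKCdef]; ring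
      _ ≤ (e' ε / e'' ε * (e'' ε) ^ β) * x ^ β * Lp (min (e'' ε * x) 1) := by
          have hA1B1nn : (0:ℝ) ≤ e' ε / e'' ε * (e'' ε) ^ β := by positivity
          refine mul_le_mul (mul_le_mul hFε hxββγ hxbg.le hA1B1nn) hLpm hm1.le
            (by positivity)
      _ = e' ε / e'' ε * (e'' ε ^ β * x ^ β * Lp (min (e'' ε * x) 1)) := by ring
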